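/- Let A be a maximal monotone operator on a real Hilbert space H with F = A⁻¹(0) nonempty, let λ_n ∈ (0,1), y₀, u ∈ H, e_n ∈ H with λ_n → 1 and (1 − λ_n)e_n → 0, and β_n → ∞. Then the sequence x_{n+1} = (I + β_n A)⁻¹(λ_n u + (1 − λ_n)(y₀ + e_n)) converges strongly to P_F u. -/

import Mathlib

open scoped RealInnerProductSpace
open Filter

variable {H : Type*} [NormedAddCommGroup H] [InnerProductSpace ℝ H] [CompleteSpace H]

/-- A (possibly set-valued) operator `A : H → Set H` is monotone. -/
def IsMonotoneOp (A : H → Set H) : Prop :=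
  ∀ x₁ y₁ x₂ y₂, y₁ ∈ A x₁ → y₂ ∈ A x₂ → 0 ≤ ⟪x₁ - x₂, y₁ - y₂⟫

/-- `A` is maximal monotone: it is monotone and any pair `[x, y]` monotonically
related to the whole graph of `A` already belongs to the graph of `A`. -/
def IsMaximalMonotone (A : H → Set H) : Prop :=
  IsMonotoneOp A ∧ ∀ x y, (∀ v w, w ∈ A v → 0 ≤ ⟪v - x, w - y⟫) → y ∈ A x

/-- `J` is the resolvent `(I + βA)⁻¹` of `A`: for every `y`, `J y` satisfies
`(y - J y)/β ∈ A (J y)`, i.e. `y ∈ (I + βA)(J y)`. -/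
def IsResolvent (A : H → Set H) (β : ℝ) (J : H → H) : Prop :=
  ∀ y, β⁻¹ • (y - J y) ∈ A (J y)

/-- `p` is the metric projection of `u` onto the set `F`. -/
def IsProjection (F : Set H) (u p : H) : Prop :=
  p ∈ F ∧ ∀ q ∈ F, ‖u - p‖ ≤ ‖u - q‖

lemma resolvent_nonexp {A : H → Set H} (hmono : IsMonotoneOp A) {β : ℝ} (hβ : 0 < β)
    {J : H → H} (hJ : IsResolvent A β J) (a b : H) : ‖J a - J b‖ ≤ ‖a - b‖ := by
  have h := hmono (J a) (β⁻¹ • (a - J a)) (J b) (β⁻¹ • (b - J b)) (hJ a) (hJ b)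
  rw [← smul_sub, real_inner_smul_right] at h
  have h2 : 0 ≤ ⟪J a - J b, (a - J a) - (b - J b)⟫ := by
    have hi : 0 < β⁻¹ := inv_pos.mpr hβ
    nlinarith [h]
  have h3 : (a - J a) - (b - J b) = (a - b) - (J a - J b) := by abel
  rw [h3, inner_sub_right, real_inner_self_eq_norm_sq] at h2
  have cs := real_inner_le_norm (J a - J b) (a - b)
  nlinarith [norm_nonneg (J a - J b), norm_nonneg (a - b)]

lemma resolvent_key {A : H → Set H} (hmono : IsMonotoneOp A) {β : ℝ} (hβ : 0 < β)
    {J : H → H} (hJ : IsResolvent A β J) {q : H} (hq : (0 : H) ∈ A q) (y : H) :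
    0 ≤ ⟪J y - q, y - J y⟫ := by
  have h := hmono (J y) (β⁻¹ • (y - J y)) q 0 (hJ y) hq
  rw [sub_zero, real_inner_smul_right] at h
  have hi : 0 < β⁻¹ := inv_pos.mpr hβ
  nlinarith [h]

lemma resolvent_pair {A : H → Set H} (hmono : IsMonotoneOp A) {bm bn : ℝ}
    (hbm : 0 < bm) (hbn : 0 < bn) {Jm Jn : H → H}
    (hJm : IsResolvent A bm Jm) (hJn : IsResolvent A bn Jn) (u : H) :
    bn * ‖u - Jm u‖ ^ 2 + bm * ‖u - Jn u‖ ^ 2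
      ≤ (bn + bm) * ⟪u - Jm u, u - Jn u⟫ := by
  have h := hmono (Jm u) (bm⁻¹ • (u - Jm u)) (Jn u) (bn⁻¹ • (u - Jn u)) (hJm u) (hJn u)
  have hd : Jm u - Jn u = (u - Jn u) - (u - Jm u) := by abel
  rw [hd] at h
  set a := u - Jm u with ha
  set b := u - Jn u with hb
  simp only [inner_sub_left, inner_sub_right, real_inner_smul_right,
    real_inner_self_eq_norm_sq] at h
  have h2 : 0 ≤ bm * bn *
      (bm⁻¹ * ⟪a, b⟫ - bn⁻¹ * ‖b‖ ^ 2 - (bm⁻¹ * ‖a‖ ^ 2 - bn⁻¹ * ⟪a, b⟫)) := by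
    apply mul_nonneg (by positivity)
    nlinarith [h, real_inner_comm a b, inv_pos.mpr hbm, inv_pos.mpr hbn]
  have h3 : bm * bn *
      (bm⁻¹ * ⟪a, b⟫ - bn⁻¹ * ‖b‖ ^ 2 - (bm⁻¹ * ‖a‖ ^ 2 - bn⁻¹ * ⟪a, b⟫))
      = bn * ⟪a, b⟫ - bm * ‖b‖ ^ 2 - bn * ‖a‖ ^ 2 + bm * ⟪a, b⟫ := by
    field_simp
    ring
  rw [h3] at h2
  linarith

lemma real_aux1 (s t c bm bn d : ℝ) (hbm : 0 < bm) (hbn : 0 < bn)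
    (hpair : bn * s + bm * t ≤ (bn + bm) * c) (hd : d = s - 2 * c + t) : d ≤ |s - t| := by
  rcases abs_cases (s - t) with ⟨h1, h2⟩ | ⟨h1, h2⟩ <;> rw [h1] <;> nlinarith

lemma real_aux2 (s t c bm bn d : ℝ) (hbm : 0 < bm) (hbn : 0 < bn)
    (hpair : bn * s + bm * t ≤ (bn + bm) * c) (hd : d = s - 2 * c + t)
    (hd0 : 0 ≤ d) (hlt : bm < bn) : s ≤ t := by
  nlinarith

/-- Second Djafari Rouhani–Moradi algorithm: the sequence
`x_{n+1} = (I + β_n A)⁻¹(λ_n u + (1-λ_n)(y₀ + e_n))` converges strongly to `P_F u`. -/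
theorem stmt_16 (A : H → Set H) (hA : IsMaximalMonotone A)
    (F : Set H) (hF : F = {x | (0 : H) ∈ A x}) (hne : F.Nonempty)
    (lam : ℕ → ℝ) (hlam : ∀ n, lam n ∈ Set.Ioo (0 : ℝ) 1)
    (hlam1 : Tendsto lam atTop (nhds 1))
    (y₀ u : H) (e : ℕ → H)
    (he : Tendsto (fun n => (1 - lam n) • e n) atTop (nhds (0 : H)))
    (β : ℕ → ℝ) (hβpos : ∀ n, 0 < β n) (hβ : Tendsto β atTop atTop)
    (J : ℕ → H → H) (hJ : ∀ n, IsResolvent A (β n) (J n))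
    (x : ℕ → H) (hx : ∀ n, x (n + 1) = J n (lam n • u + (1 - lam n) • (y₀ + e n)))
    (p : H) (hp : IsProjection F u p) :
    Tendsto x atTop (nhds p) := by
  obtain ⟨hmono, hmax⟩ := hA
  have hpA : (0 : H) ∈ A p := by have h := hp.1; rw [hF] at h; exact h
  -- key inequality with p
  have key : ∀ n, 0 ≤ ⟪J n u - p, u - J n u⟫ := fun n =>
    resolvent_key hmono (hβpos n) (hJ n) hpA u
  -- bound ‖u - J n u‖ ≤ ‖u - p‖
  have hbd : ∀ n, ‖u - J n u‖ ≤ ‖u - p‖ := by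
    intro n
    have h1 : ‖u - J n u‖ ^ 2 ≤ ⟪u - p, u - J n u⟫ := by
      have hid : u - p = (u - J n u) + (J n u - p) := by abel
      rw [hid, inner_add_left, real_inner_self_eq_norm_sq]
      linarith [key n]
    have cs2 := real_inner_le_norm (u - p) (u - J n u)
    nlinarith [norm_nonneg (u - J n u), norm_nonneg (u - p)]
  -- pairwise estimates
  have hdd : ∀ m n : ℕ, ‖J m u - J n u‖ ^ 2
      = ‖u - J m u‖ ^ 2 - 2 * ⟪u - J m u, u - J n u⟫ + ‖u - J n u‖ ^ 2 := by
    intro m n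
    have hid : J m u - J n u = (u - J n u) - (u - J m u) := by abel
    rw [hid, norm_sub_sq_real, real_inner_comm]
    ring
  have pairAbs : ∀ m n : ℕ, ‖J m u - J n u‖ ^ 2
      ≤ |‖u - J m u‖ ^ 2 - ‖u - J n u‖ ^ 2| :=
    fun m n => real_aux1 _ _ _ _ _ _ (hβpos m) (hβpos n)
      (resolvent_pair hmono (hβpos m) (hβpos n) (hJ m) (hJ n) u) (hdd m n)
  have pairMono : ∀ m n : ℕ, β m < β n → ‖u - J m u‖ ^ 2 ≤ ‖u - J n u‖ ^ 2 :=
    fun m n hlt => real_aux2 _ _ _ _ _ _ (hβpos m) (hβpos n)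
      (resolvent_pair hmono (hβpos m) (hβpos n) (hJ m) (hJ n) u) (hdd m n)
      (by positivity) hlt
  -- Cauchy
  set r : ℕ → ℝ := fun n => ‖u - J n u‖ ^ 2 with hrdef
  have hrbd : ∀ n, r n ≤ ‖u - p‖ ^ 2 := by
    intro n
    have h := hbd n
    simp only [hrdef]
    nlinarith [norm_nonneg (u - J n u)]
  have hbdd : BddAbove (Set.range r) := ⟨‖u - p‖ ^ 2, by rintro _ ⟨n, rfl⟩; exact hrbd n⟩
  have hcauchy : CauchySeq (fun n => J n u) := by
    rw [Metric.cauchySeq_iff]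
    intro ε hε
    have hL : (⨆ n, r n) - ε ^ 2 / 2 < ⨆ n, r n := sub_lt_self _ (by positivity)
    obtain ⟨N₀, hN₀⟩ := exists_lt_of_lt_ciSup hL
    obtain ⟨M, hM⟩ := Filter.eventually_atTop.mp (hβ.eventually_gt_atTop (β N₀))
    refine ⟨M, fun m hm n hn => ?_⟩
    have h1 : r N₀ ≤ r m := pairMono N₀ m (hM m hm)
    have h2 : r N₀ ≤ r n := pairMono N₀ n (hM n hn)
    have h3 : r m ≤ ⨆ k, r k := le_ciSup hbdd m
    have h4 : r n ≤ ⨆ k, r k := le_ciSup hbdd n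
    have h5 : ‖J m u - J n u‖ ^ 2 ≤ |r m - r n| := pairAbs m n
    have h6 : |r m - r n| ≤ ε ^ 2 / 2 := by
      rw [abs_sub_le_iff]
      constructor <;> linarith
    rw [dist_eq_norm]
    nlinarith [norm_nonneg (J m u - J n u), hε]
  obtain ⟨w, hw⟩ := cauchySeq_tendsto_of_complete hcauchy
  -- w ∈ F
  have hβinv : Tendsto (fun n => (β n)⁻¹) atTop (nhds (0 : ℝ)) := hβ.inv_tendsto_atTop
  have hwA : (0 : H) ∈ A w := by
    apply hmax
    intro v ww hvw
    have hterm : ∀ n, 0 ≤ ⟪v - J n u, ww - (β n)⁻¹ • (u - J n u)⟫ :=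
      fun n => hmono v ww (J n u) ((β n)⁻¹ • (u - J n u)) hvw (hJ n u)
    have hy : Tendsto (fun n => (β n)⁻¹ • (u - J n u)) atTop (nhds (0 : H)) := by
      have hz : Tendsto (fun n => u - J n u) atTop (nhds (u - w)) :=
        tendsto_const_nhds.sub hw
      have h := hβinv.smul hz
      simpa using h
    have hinner : Tendsto (fun n => ⟪v - J n u, ww - (β n)⁻¹ • (u - J n u)⟫) atTop
        (nhds ⟪v - w, ww - 0⟫) :=
      (tendsto_const_nhds.sub hw).inner (tendsto_const_nhds.sub hy)
    have h0 := ge_of_tendsto' hinner hterm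
    simpa using h0
  have hwF : w ∈ F := by rw [hF]; exact hwA
  -- w = p
  have hnormz : Tendsto (fun n => ‖u - J n u‖) atTop (nhds ‖u - w‖) :=
    (tendsto_const_nhds.sub hw).norm
  have hle1 : ‖u - w‖ ≤ ‖u - p‖ := le_of_tendsto' hnormz hbd
  have hle2 : ‖u - p‖ ≤ ‖u - w‖ := hp.2 w hwF
  have hnorm_eq : ‖u - w‖ = ‖u - p‖ := le_antisymm hle1 hle2
  have hkey2 : 0 ≤ ⟪w - p, u - w⟫ := by
    have ht : Tendsto (fun n => ⟪J n u - p, u - J n u⟫) atTop (nhds ⟪w - p, u - w⟫) :=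
      (hw.sub tendsto_const_nhds).inner (tendsto_const_nhds.sub hw)
    exact ge_of_tendsto' ht key
  have hwp : w = p := by
    have hexp : ‖w - p‖ ^ 2 = ‖u - p‖ ^ 2 - 2 * ⟪u - p, u - w⟫ + ‖u - w‖ ^ 2 := by
      have hid : w - p = (u - p) - (u - w) := by abel
      rw [hid, norm_sub_sq_real]
    have hip : ⟪w - p, u - w⟫ = ⟪u - p, u - w⟫ - ‖u - w‖ ^ 2 := by
      have hid : w - p = (u - p) - (u - w) := by abel
      rw [hid, inner_sub_left, real_inner_self_eq_norm_sq]
    rw [hnorm_eq] at hexp hip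
    have hsq : ‖w - p‖ ^ 2 ≤ 0 := by nlinarith [hkey2]
    have h0 : ‖w - p‖ = 0 := by nlinarith [norm_nonneg (w - p)]
    exact sub_eq_zero.mp (norm_eq_zero.mp h0)
  rw [hwp] at hw
  -- final step: x (n+1) close to J n u
  have hxz : ∀ n, ‖x (n + 1) - J n u‖
      ≤ ‖(lam n • u + (1 - lam n) • (y₀ + e n)) - u‖ := by
    intro n
    rw [hx n]
    exact resolvent_nonexp hmono (hβpos n) (hJ n) _ u
  have hun : Tendsto (fun n => (lam n • u + (1 - lam n) • (y₀ + e n)) - u) atTop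
      (nhds (0 : H)) := by
    have h1 : ∀ n, (lam n • u + (1 - lam n) • (y₀ + e n)) - u
        = (1 - lam n) • (y₀ - u) + (1 - lam n) • e n := by
      intro n
      module
    simp only [h1]
    have h2 : Tendsto (fun n => 1 - lam n) atTop (nhds (0 : ℝ)) := by
      have h := hlam1.const_sub 1
      simpa using h
    have h3 : Tendsto (fun n => (1 - lam n) • (y₀ - u)) atTop
        (nhds ((0 : ℝ) • (y₀ - u))) := h2.smul_const _
    have h4 := h3.add he
    simpa using h4
  have hznp : Tendsto (fun n => ‖J n u - p‖) atTop (nhds (0 : ℝ)) := by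
    have h := (hw.sub (tendsto_const_nhds : Tendsto (fun _ : ℕ => p) atTop (nhds p))).norm
    simpa using h
  have hxp : Tendsto (fun n => x (n + 1)) atTop (nhds p) := by
    rw [tendsto_iff_norm_sub_tendsto_zero]
    apply squeeze_zero (fun n => norm_nonneg _)
      (g := fun n => ‖(lam n • u + (1 - lam n) • (y₀ + e n)) - u‖ + ‖J n u - p‖)
    · intro n
      calc ‖x (n + 1) - p‖ ≤ ‖x (n + 1) - J n u‖ + ‖J n u - p‖ :=
            norm_sub_le_norm_sub_add_norm_sub _ _ _
        _ ≤ ‖(lam n • u + (1 - lam n) • (y₀ + e n)) - u‖ + ‖J n u - p‖ :=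
            (add_le_add_iff_right _).mpr (hxz n)
    · have h := hun.norm.add hznp
      simpa using h
  exact (tendsto_add_atTop_iff_nat 1).mp hxp
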